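/- Let C be a ℂ-linear braided monoidal category and A a commutative rigid monoid object with nonzero dim A. Then the free functor F and the forgetful functor G are two-sided adjoints: in addition to the usual adjunction F ⊣ G, for every V in C and every module X over A there is a bijection, natural in V and X, between Hom_{Mod A}(X, F(V)) and Hom_C(G(X), V), whose forward map sends φ : X ⟶ A ⊗ V to (ε ⊗ id_V) ∘ φ : X ⟶ V. -/

import Mathlib

open CategoryTheory MonoidalCategory Limits

universe v u

variable {C : Type u} [Category.{v} C] [MonoidalCategory C]

/-- The free module `F(V) = A ⊗ V` over a monoid object `A`, with action `μ ⊗ id_V`. -/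
@[simps]
def freeMod (A : Mon C) (V : C) : Mod C A.X where
  X := A.X ⊗ V
  mod :=
  { smul := (α_ A.X A.X V).inv ≫ (A.mon.mul ▷ V)
    one_smul := by
      change _ ▷ _ ≫ _ = (λ_ (A.X ⊗ V)).hom
      rw [associator_inv_naturality_left_assoc, ← comp_whiskerRight, MonObj.one_mul]
      monoidal
    mul_smul := by
      change _ ▷ _ ≫ _ = (α_ _ _ _).hom ≫ _ ◁ _ ≫ _
      simp only [MonoidalCategory.whiskerLeft_comp]
      slice_rhs 3 4 => rw [associator_inv_naturality_middle]
      rw [associator_inv_naturality_left_assoc, ← comp_whiskerRight, MonObj.mul_assoc]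
      simp only [comp_whiskerRight, Category.assoc]
      monoidal }

attribute [reducible] freeMod

namespace CategoryTheory.Mod

variable {A : Mon C}

def act (X : Mod C A.X) : A.X ⊗ X.X ⟶ X.X := X.mod.smul

theorem one_act (X : Mod C A.X) : (A.mon.one ▷ X.X) ≫ X.act = (λ_ X.X).hom :=
  ModObj.one_smul (M := A.X) X.X

theorem assoc_flip' (X : Mod C A.X) :
    (A.X ◁ X.act) ≫ X.act = (α_ A.X A.X X.X).inv ≫ (A.mon.mul ▷ X.X) ≫ X.act :=
  Mod.assoc_flip X

theorem Hom.act_hom {X Y : Mod C A.X} (f : X ⟶ Y) : X.act ≫ f.hom = (A.X ◁ f.hom) ≫ Y.act :=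
  IsModHom.smul_hom (A := A.X) (f := f.hom)

theorem isModHom_of {X Y : Mod C A.X} (f : X.X ⟶ Y.X) (h : X.act ≫ f = (A.X ◁ f) ≫ Y.act) :
    IsModHom A.X f := ⟨h⟩

end CategoryTheory.Mod

@[simp]
theorem freeMod_act (A : Mon C) (V : C) :
    (freeMod A V).act = (α_ A.X A.X V).inv ≫ (A.mon.mul ▷ V) := rfl

/-!
STATEMENT 16: For a commutative rigid monoid object `A` with nonzero `dim A`, the free
functor `F` and forgetful functor `G` are two-sided adjoints: in addition to `F ⊣ G`,
there is a bijection, natural in `V` and `X`, between `Hom_{Mod A}(X, F(V))` and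
`Hom_C(G(X), V)`, whose forward map sends `φ : X ⟶ A ⊗ V` to `(ε ⊗ id_V) ∘ φ`.
-/


theorem frob (A : Mon C) (ε : A.X ⟶ 𝟙_ C) (iA : 𝟙_ C ⟶ A.X ⊗ A.X)
    (zig : (λ_ A.X).inv ≫ (iA ▷ A.X) ≫ (α_ A.X A.X A.X).hom ≫ (A.X ◁ (A.mon.mul ≫ ε)) ≫
        (ρ_ A.X).hom = 𝟙 A.X)
    (zag : (ρ_ A.X).inv ≫ (A.X ◁ iA) ≫ (α_ A.X A.X A.X).inv ≫ ((A.mon.mul ≫ ε) ▷ A.X) ≫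
        (λ_ A.X).hom = 𝟙 A.X) :
    (λ_ A.X).inv ≫ (iA ▷ A.X) ≫ (α_ A.X A.X A.X).hom ≫ (A.X ◁ A.mon.mul)
      = (ρ_ A.X).inv ≫ (A.X ◁ iA) ≫ (α_ A.X A.X A.X).inv ≫ (A.mon.mul ▷ A.X) := by
  have L : (λ_ A.X).inv ≫ (iA ▷ A.X) ≫ (α_ A.X A.X A.X).hom ≫ (A.X ◁ A.mon.mul)
      = ((λ_ A.X).inv ≫ (iA ▷ A.X) ≫ (α_ A.X A.X A.X).hom ≫ (A.X ◁ A.mon.mul)) ≫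
        (A.X ◁ ((ρ_ A.X).inv ≫ (A.X ◁ iA) ≫ (α_ A.X A.X A.X).inv ≫ ((A.mon.mul ≫ ε) ▷ A.X) ≫
        (λ_ A.X).hom)) := by
    rw [zag]; simp
  have R : (ρ_ A.X).inv ≫ (A.X ◁ iA) ≫ (α_ A.X A.X A.X).inv ≫ (A.mon.mul ▷ A.X)
      = ((ρ_ A.X).inv ≫ (A.X ◁ iA) ≫ (α_ A.X A.X A.X).inv ≫ (A.mon.mul ▷ A.X)) ≫
        (((λ_ A.X).inv ≫ (iA ▷ A.X) ≫ (α_ A.X A.X A.X).hom ≫ (A.X ◁ (A.mon.mul ≫ ε)) ≫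
        (ρ_ A.X).hom) ▷ A.X) := by
    rw [zig]; simp
  rw [L, R]
  simp only [comp_whiskerRight, MonoidalCategory.whiskerLeft_comp, Category.assoc]
  slice_lhs 4 5 => rw [← MonoidalCategory.whiskerLeft_comp, rightUnitor_inv_naturality,
    MonoidalCategory.whiskerLeft_comp]
  slice_lhs 5 6 => rw [← MonoidalCategory.whiskerLeft_comp, ← whisker_exchange,
    MonoidalCategory.whiskerLeft_comp]
  slice_lhs 6 7 => rw [← MonoidalCategory.whiskerLeft_comp, associator_inv_naturality_left,
    MonoidalCategory.whiskerLeft_comp]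
  slice_lhs 7 8 => rw [← MonoidalCategory.whiskerLeft_comp, ← comp_whiskerRight, MonObj.mul_assoc]
  slice_rhs 4 5 => rw [← comp_whiskerRight, leftUnitor_inv_naturality, comp_whiskerRight]
  slice_rhs 5 6 => rw [← comp_whiskerRight, whisker_exchange, comp_whiskerRight]
  rw [show A.X ◁ ((A.X ⊗ A.X) ◁ iA) = (α_ A.X (A.X ⊗ A.X) (𝟙_ C)).inv ≫
    ((A.X ⊗ (A.X ⊗ A.X)) ◁ iA) ≫ (α_ A.X (A.X ⊗ A.X) (A.X ⊗ A.X)).hom from by monoidal]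
  simp only [Category.assoc]
  rw [reassoc_of% (show (α_ A.X A.X A.X).hom ≫ A.X ◁ (ρ_ (A.X ⊗ A.X)).inv ≫
    (α_ A.X (A.X ⊗ A.X) (𝟙_ C)).inv = (ρ_ ((A.X ⊗ A.X) ⊗ A.X)).inv ≫
    ((α_ A.X A.X A.X).hom ▷ 𝟙_ C) from by monoidal)]
  rw [reassoc_of% (rightUnitor_inv_naturality (iA ▷ A.X)),
    ← comp_whiskerRight_assoc (iA ▷ A.X) (α_ A.X A.X A.X).hom,
    reassoc_of% ((whisker_exchange (iA ▷ A.X ≫ (α_ A.X A.X A.X).hom) iA).symm)]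
  simp only [comp_whiskerRight, MonoidalCategory.whiskerLeft_comp, Category.assoc]
  monoidal

section

variable (A : Mon C) (ε : A.X ⟶ 𝟙_ C) (iA : 𝟙_ C ⟶ A.X ⊗ A.X)

/-- the comodule-style coevaluation `x ↦ Σ aᵢ ⊗ aᵢ' x` -/
def coev (X : Mod C A.X) : X.X ⟶ A.X ⊗ X.X :=
  (λ_ X.X).inv ≫ (iA ▷ X.X) ≫ (α_ A.X A.X X.X).hom ≫ (A.X ◁ X.act)

theorem key (X : Mod C A.X)
    (zig : (λ_ A.X).inv ≫ (iA ▷ A.X) ≫ (α_ A.X A.X A.X).hom ≫ (A.X ◁ (A.mon.mul ≫ ε)) ≫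
        (ρ_ A.X).hom = 𝟙 A.X)
    (zag : (ρ_ A.X).inv ≫ (A.X ◁ iA) ≫ (α_ A.X A.X A.X).inv ≫ ((A.mon.mul ≫ ε) ▷ A.X) ≫
        (λ_ A.X).hom = 𝟙 A.X) :
    X.act ≫ coev A iA X
      = (A.X ◁ coev A iA X) ≫ (α_ A.X A.X X.X).inv ≫ (A.mon.mul ▷ X.X) := by
  have hL : X.act ≫ coev A iA X
      = (((λ_ A.X).inv ≫ (iA ▷ A.X) ≫ (α_ A.X A.X A.X).hom ≫ (A.X ◁ A.mon.mul)) ▷ X.X) ≫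
        (α_ A.X A.X X.X).hom ≫ (A.X ◁ X.act) := by
    dsimp only [coev]
    rw [reassoc_of% (leftUnitor_inv_naturality X.act),
      reassoc_of% (whisker_exchange iA X.act),
      reassoc_of% (associator_naturality_right A.X A.X X.act),
      ← MonoidalCategory.whiskerLeft_comp, Mod.assoc_flip',
      MonoidalCategory.whiskerLeft_comp, MonoidalCategory.whiskerLeft_comp]
    simp only [comp_whiskerRight, Category.assoc]
    monoidal
  have hR : (A.X ◁ coev A iA X) ≫ (α_ A.X A.X X.X).inv ≫ (A.mon.mul ▷ X.X)
      = (((ρ_ A.X).inv ≫ (A.X ◁ iA) ≫ (α_ A.X A.X A.X).inv ≫ (A.mon.mul ▷ A.X)) ▷ X.X) ≫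
        (α_ A.X A.X X.X).hom ≫ (A.X ◁ X.act) := by
    dsimp only [coev]
    simp only [MonoidalCategory.whiskerLeft_comp, Category.assoc]
    rw [reassoc_of% (associator_inv_naturality_right A.X A.X X.act),
      whisker_exchange A.mon.mul X.act]
    simp only [comp_whiskerRight, Category.assoc]
    monoidal
  rw [hL, hR, frob A ε iA zig zag]

end

section

variable (A : Mon C) (ε : A.X ⟶ 𝟙_ C) (iA : 𝟙_ C ⟶ A.X ⊗ A.X)

theorem unit_copair (hε : A.mon.one ≫ ε = 𝟙 (𝟙_ C))
    (zag : (ρ_ A.X).inv ≫ (A.X ◁ iA) ≫ (α_ A.X A.X A.X).inv ≫ ((A.mon.mul ≫ ε) ▷ A.X) ≫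
        (λ_ A.X).hom = 𝟙 A.X) :
    iA ≫ (ε ▷ A.X) ≫ (λ_ A.X).hom = A.mon.one := by
  have h2 : A.mon.one ≫ ((ρ_ A.X).inv ≫ (A.X ◁ iA) ≫ (α_ A.X A.X A.X).inv ≫
      ((A.mon.mul ≫ ε) ▷ A.X) ≫ (λ_ A.X).hom) = iA ≫ (ε ▷ A.X) ≫ (λ_ A.X).hom := by
    rw [reassoc_of% (rightUnitor_inv_naturality A.mon.one),
      reassoc_of% ((whisker_exchange A.mon.one iA).symm),
      reassoc_of% (associator_inv_naturality_left A.mon.one A.X A.X)]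
    simp only [comp_whiskerRight, Category.assoc]
    rw [← comp_whiskerRight_assoc (A.mon.one ▷ A.X) A.mon.mul, MonObj.one_mul]
    monoidal
  rw [← h2, zag, Category.comp_id]

theorem counit_coev (X : Mod C A.X) (hε : A.mon.one ≫ ε = 𝟙 (𝟙_ C))
    (zag : (ρ_ A.X).inv ≫ (A.X ◁ iA) ≫ (α_ A.X A.X A.X).inv ≫ ((A.mon.mul ≫ ε) ▷ A.X) ≫
        (λ_ A.X).hom = 𝟙 A.X) :
    coev A iA X ≫ (ε ▷ X.X) ≫ (λ_ X.X).hom = 𝟙 X.X := by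
  dsimp only [coev]
  simp only [Category.assoc]
  rw [reassoc_of% (whisker_exchange ε X.act), leftUnitor_naturality]
  rw [reassoc_of% (show (λ_ X.X).inv ≫ (iA ▷ X.X) ≫ (α_ A.X A.X X.X).hom ≫ (ε ▷ (A.X ⊗ X.X)) ≫
      (λ_ (A.X ⊗ X.X)).hom = (λ_ X.X).inv ≫ ((iA ≫ (ε ▷ A.X) ≫ (λ_ A.X).hom) ▷ X.X) from by
    simp only [comp_whiskerRight, Category.assoc]; monoidal)]
  rw [unit_copair A ε iA hε zag]
  simp [Mod.one_act]

end

section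

variable (A : Mon C) (ε : A.X ⟶ 𝟙_ C) (iA : 𝟙_ C ⟶ A.X ⊗ A.X)

@[simps]
def toFree {V : C} {X : Mod C A.X} (f : V ⟶ X.X) : freeMod A V ⟶ X where
  hom := (A.X ◁ f) ≫ X.act
  isModHom := Mod.isModHom_of (X := freeMod A V) (Y := X) _ <| by
    change (freeMod A V).act ≫ _ = (A.X ◁ _) ≫ X.act
    dsimp
    slice_lhs 2 3 => rw [← whisker_exchange]
    slice_rhs 1 1 => rw [MonoidalCategory.whiskerLeft_comp]
    slice_rhs 2 3 => rw [Mod.assoc_flip']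
    slice_rhs 1 2 => rw [associator_inv_naturality_right]
    simp

theorem first_left_inv {V : C} {X : Mod C A.X} (φ : freeMod A V ⟶ X) :
    toFree A ((λ_ V).inv ≫ (A.mon.one ▷ V) ≫ φ.hom) = φ := by
  ext
  rw [toFree_hom]
  simp only [MonoidalCategory.whiskerLeft_comp, Category.assoc]
  slice_lhs 3 4 => rw [← φ.act_hom]
  dsimp only [freeMod_act]
  slice_lhs 2 3 => rw [associator_inv_naturality_middle]
  slice_lhs 3 4 => rw [← comp_whiskerRight, MonObj.mul_one]
  monoidal

theorem first_right_inv {V : C} {X : Mod C A.X} (f : V ⟶ X.X) :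
    (λ_ V).inv ≫ (A.mon.one ▷ V) ≫ (toFree A f).hom = f := by
  rw [toFree_hom]
  slice_lhs 2 3 => rw [← whisker_exchange]
  slice_lhs 3 4 => rw [Mod.one_act]
  simp

@[simps]
def toCofree {V : C} (X : Mod C A.X)
    (zig : (λ_ A.X).inv ≫ (iA ▷ A.X) ≫ (α_ A.X A.X A.X).hom ≫ (A.X ◁ (A.mon.mul ≫ ε)) ≫
        (ρ_ A.X).hom = 𝟙 A.X)
    (zag : (ρ_ A.X).inv ≫ (A.X ◁ iA) ≫ (α_ A.X A.X A.X).inv ≫ ((A.mon.mul ≫ ε) ▷ A.X) ≫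
        (λ_ A.X).hom = 𝟙 A.X)
    (f : X.X ⟶ V) : X ⟶ freeMod A V where
  hom := coev A iA X ≫ (A.X ◁ f)
  isModHom := Mod.isModHom_of (X := X) (Y := freeMod A V) _ <| by
    change X.act ≫ _ = (A.X ◁ _) ≫ (freeMod A V).act
    dsimp only [freeMod_act, freeMod_X]
    rw [reassoc_of% (key A ε iA X zig zag)]
    simp only [MonoidalCategory.whiskerLeft_comp, Category.assoc]
    rw [← whisker_exchange]
    rw [reassoc_of% ((associator_inv_naturality_right A.X A.X f).symm)]

theorem second_right_inv {V : C} (X : Mod C A.X) (hε : A.mon.one ≫ ε = 𝟙 (𝟙_ C))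
    (zig : (λ_ A.X).inv ≫ (iA ▷ A.X) ≫ (α_ A.X A.X A.X).hom ≫ (A.X ◁ (A.mon.mul ≫ ε)) ≫
        (ρ_ A.X).hom = 𝟙 A.X)
    (zag : (ρ_ A.X).inv ≫ (A.X ◁ iA) ≫ (α_ A.X A.X A.X).inv ≫ ((A.mon.mul ≫ ε) ▷ A.X) ≫
        (λ_ A.X).hom = 𝟙 A.X)
    (f : X.X ⟶ V) :
    (toCofree A ε iA X zig zag f).hom ≫ (ε ▷ V) ≫ (λ_ V).hom = f := by
  rw [toCofree_hom]
  rw [Category.assoc, reassoc_of% (whisker_exchange ε f), leftUnitor_naturality]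
  rw [reassoc_of% (counit_coev A ε iA X hε zag)]

theorem second_left_inv {V : C} (X : Mod C A.X) (hε : A.mon.one ≫ ε = 𝟙 (𝟙_ C))
    (zig : (λ_ A.X).inv ≫ (iA ▷ A.X) ≫ (α_ A.X A.X A.X).hom ≫ (A.X ◁ (A.mon.mul ≫ ε)) ≫
        (ρ_ A.X).hom = 𝟙 A.X)
    (zag : (ρ_ A.X).inv ≫ (A.X ◁ iA) ≫ (α_ A.X A.X A.X).inv ≫ ((A.mon.mul ≫ ε) ▷ A.X) ≫
        (λ_ A.X).hom = 𝟙 A.X)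
    (φ : X ⟶ freeMod A V) :
    toCofree A ε iA X zig zag (φ.hom ≫ (ε ▷ V) ≫ (λ_ V).hom) = φ := by
  ext
  rw [toCofree_hom]
  dsimp only [coev]
  simp only [MonoidalCategory.whiskerLeft_comp, Category.assoc]
  rw [← MonoidalCategory.whiskerLeft_comp_assoc A.X X.act φ.hom, φ.act_hom]
  dsimp only [freeMod_act, freeMod_X]
  simp only [MonoidalCategory.whiskerLeft_comp, Category.assoc]
  rw [reassoc_of% (show (iA ▷ X.X) ≫ (α_ A.X A.X X.X).hom ≫ (A.X ◁ (A.X ◁ φ.hom)) =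
      (𝟙_ C ◁ φ.hom) ≫ (iA ▷ (A.X ⊗ V)) ≫ (α_ A.X A.X (A.X ⊗ V)).hom from by
    rw [← associator_naturality_right]
    rw [reassoc_of% ((whisker_exchange iA φ.hom).symm)]),
    reassoc_of% ((leftUnitor_inv_naturality φ.hom).symm)]
  rw [show (λ_ (A.X ⊗ V)).inv ≫ (iA ▷ (A.X ⊗ V)) ≫ (α_ A.X A.X (A.X ⊗ V)).hom ≫
      (A.X ◁ (α_ A.X A.X V).inv) ≫ (A.X ◁ (A.mon.mul ▷ V)) ≫ (A.X ◁ (ε ▷ V)) ≫ (A.X ◁ (λ_ V).hom) =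
      ((λ_ A.X).inv ≫ (iA ▷ A.X) ≫ (α_ A.X A.X A.X).hom ≫ (A.X ◁ (A.mon.mul ≫ ε)) ≫
        (ρ_ A.X).hom) ▷ V from by
    simp only [comp_whiskerRight, MonoidalCategory.whiskerLeft_comp, Category.assoc]; monoidal]
  rw [zig]
  simp

end


theorem free_forget_two_sided_adjoint
    [BraidedCategory C] [Preadditive C] [CategoryTheory.Linear ℂ C]
    (A : Mon C) (hcomm : (β_ A.X A.X).hom ≫ A.mon.mul = A.mon.mul)
    (h1 : Module.finrank ℂ (𝟙_ C ⟶ A.X) = 1)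
    (ε : A.X ⟶ 𝟙_ C) (hε : A.mon.one ≫ ε = 𝟙 (𝟙_ C))
    (iA : 𝟙_ C ⟶ A.X ⊗ A.X)
    (zig : (λ_ A.X).inv ≫ (iA ▷ A.X) ≫ (α_ A.X A.X A.X).hom ≫ (A.X ◁ (A.mon.mul ≫ ε)) ≫
        (ρ_ A.X).hom = 𝟙 A.X)
    (zag : (ρ_ A.X).inv ≫ (A.X ◁ iA) ≫ (α_ A.X A.X A.X).inv ≫ ((A.mon.mul ≫ ε) ▷ A.X) ≫
        (λ_ A.X).hom = 𝟙 A.X)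
    (d : ℂ) (hd : iA ≫ A.mon.mul ≫ ε = d • 𝟙 (𝟙_ C)) (hd0 : d ≠ 0)
    (V : C) (X : Mod C A.X) :
    -- the usual adjunction `F ⊣ G`: `φ ↦ φ ∘ (ι ⊗ id_V)` is a bijection
    Function.Bijective
        (fun φ : freeMod A V ⟶ X => (λ_ V).inv ≫ (A.mon.one ▷ V) ≫ φ.hom) ∧
      -- the second adjunction `G ⊣ F`: `φ ↦ (ε ⊗ id_V) ∘ φ` is a bijection ...
      Function.Bijective
        (fun φ : X ⟶ freeMod A V => φ.hom ≫ (ε ▷ V) ≫ (λ_ V).hom) ∧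
      -- ... natural in `X` ...
      (∀ (X' : Mod C A.X) (h : X' ⟶ X) (φ : X ⟶ freeMod A V),
          (h ≫ φ).hom ≫ (ε ▷ V) ≫ (λ_ V).hom = h.hom ≫ φ.hom ≫ (ε ▷ V) ≫ (λ_ V).hom) ∧
      -- ... and natural in `V`
      (∀ (V' : C) (g : V ⟶ V') (φ : X ⟶ freeMod A V) (φ' : X ⟶ freeMod A V'),
          φ'.hom = φ.hom ≫ (A.X ◁ g) →
            φ'.hom ≫ (ε ▷ V') ≫ (λ_ V').hom = (φ.hom ≫ (ε ▷ V) ≫ (λ_ V).hom) ≫ g) := by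
  refine ⟨?_, ?_, ?_, ?_⟩
  · exact Function.bijective_iff_has_inverse.mpr
      ⟨toFree A, fun φ => first_left_inv A φ, fun f => first_right_inv A f⟩
  · exact Function.bijective_iff_has_inverse.mpr
      ⟨toCofree A ε iA X zig zag,
        fun φ => second_left_inv A ε iA X hε zig zag φ,
        fun f => second_right_inv A ε iA X hε zig zag f⟩
  · intro X' h φ; simp
  · intro V' g φ φ' hφ
    rw [hφ, Category.assoc, reassoc_of% (whisker_exchange ε g), leftUnitor_naturality]
    simp
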